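/- arXiv:1912.01143 — 2 statements merged into one kernel-verified Lean document; each statement's English description precedes it below -/
import Mathlib

section
/- Let m ≥ 2, r ≥ 1, and let c : {1, …, m−1} → {1, …, r} be a linear colouring of K_m such that for each colour s ∈ {1, …, r} there is no monochromatic complete subgraph on k_s vertices in colour s (where each k_s ≥ 2). Then there exists a cyclic colouring c'' of the complete graph K_{3m−1} in the r + 1 colours {1, …, r+1} such that: for each s ∈ {1, …, r} there is no monochromatic complete subgraph on k_s vertices in colour s, and there is no monochromatic triangle (complete subgraph on 3 vertices) in colour r + 1. -/
set_option maxHeartbeats 1000000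


/-- `HasMonoClique col s k` : the complete graph on `Fin n`, with each edge `{i, j}`
coloured `col i j`, contains a monochromatic complete subgraph on `k` vertices in
colour `s`, i.e. a set of `k` vertices all of whose connecting edges have colour `s`. -/
def HasMonoClique {n : ℕ} (col : Fin n → Fin n → ℕ) (s k : ℕ) : Prop :=
  ∃ S : Finset (Fin n), S.card = k ∧ ∀ i ∈ S, ∀ j ∈ S, i ≠ j → col i j = s

/-- The linear colouring of `K_n` determined by the length-colouring `c` :
the edge `{i, j}` receives colour `c (|i - j|)`. -/
def linCol (n : ℕ) (c : ℕ → ℕ) (i j : Fin n) : ℕ :=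
  c (max i.val j.val - min i.val j.val)

/-- The cyclic extension colouring on `K_{3m-1}`. -/
def ccol (m r : ℕ) (c : ℕ → ℕ) (l : ℕ) : ℕ :=
  if l ≤ m - 1 then c l else if 2*m ≤ l then c (3*m - 1 - l) else r + 1

lemma ccol_spec (m r : ℕ) (hm : 2 ≤ m) (c : ℕ → ℕ) (l : ℕ) (h1 : 1 ≤ l) (h2 : l ≤ 3*m-2) :
    (1 ≤ min l (3*m-1-l) ∧ min l (3*m-1-l) ≤ m - 1 ∧ ccol m r c l = c (min l (3*m-1-l))) ∨
    (m ≤ min l (3*m-1-l) ∧ ccol m r c l = r + 1) := by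
  unfold ccol
  split_ifs with h3 h4
  · have hmin : min l (3*m-1-l) = l := by omega
    exact Or.inl ⟨by omega, by omega, by rw [hmin]⟩
  · have hmin : min l (3*m-1-l) = 3*m-1-l := by omega
    exact Or.inl ⟨by omega, by omega, by rw [hmin]⟩
  · exact Or.inr ⟨by omega, rfl⟩

lemma rotval (Nn u v : ℕ) (hu : u < Nn) (hv : v < Nn) :
    (v + (Nn - u)) % Nn = if u ≤ v then v - u else Nn - (u - v) := by
  split_ifs with h
  · have e : v + (Nn - u) = (v - u) + Nn := by omega
    rw [e, Nat.add_mod_right, Nat.mod_eq_of_lt (by omega)]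
  · have e : v + (Nn - u) = Nn - (u - v) := by omega
    rw [e, Nat.mod_eq_of_lt (by omega)]

lemma w_lt (m bv vv : ℕ) (hm : 2 ≤ m) (hb : bv < 3*m-1) (hv : vv < 3*m-1) :
    (if bv ≤ vv then vv - bv else 3*m-1 - (bv - vv)) < 3*m-1 := by
  split_ifs <;> omega

lemma w_inj (m bv uv vv : ℕ) (hm : 2 ≤ m) (hb : bv < 3*m-1) (hu : uv < 3*m-1)
    (hv : vv < 3*m-1) (hne : uv ≠ vv) :
    (if bv ≤ uv then uv - bv else 3*m-1 - (bv - uv)) ≠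
    (if bv ≤ vv then vv - bv else 3*m-1 - (bv - vv)) := by
  split_ifs <;> omega

lemma w_dd (m bv uv vv : ℕ) (hm : 2 ≤ m) (hb : bv < 3*m-1) (hu : uv < 3*m-1) (hv : vv < 3*m-1) :
    max (if bv ≤ uv then uv - bv else 3*m-1 - (bv - uv)) (if bv ≤ vv then vv - bv else 3*m-1 - (bv - vv))
      - min (if bv ≤ uv then uv - bv else 3*m-1 - (bv - uv)) (if bv ≤ vv then vv - bv else 3*m-1 - (bv - vv))
      = max uv vv - min uv vv ∨
    max (if bv ≤ uv then uv - bv else 3*m-1 - (bv - uv)) (if bv ≤ vv then vv - bv else 3*m-1 - (bv - vv))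
      - min (if bv ≤ uv then uv - bv else 3*m-1 - (bv - uv)) (if bv ≤ vv then vv - bv else 3*m-1 - (bv - vv))
      = 3*m-1 - (max uv vv - min uv vv) := by
  split_ifs <;> omega

lemma w_arc (m D wv vv bv tv : ℕ) (hm : 2 ≤ m) (hD2 : D ≤ m - 1)
    (h1 : min (max vv bv - min vv bv) (3*m-1 - (max vv bv - min vv bv)) ≤ D)
    (h2 : min (max vv tv - min vv tv) (3*m-1 - (max vv tv - min vv tv)) ≤ D)
    (hd1 : max wv 0 - min wv 0 = max vv bv - min vv bv ∨
           max wv 0 - min wv 0 = 3*m-1 - (max vv bv - min vv bv))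
    (hd2 : max wv D - min wv D = max vv tv - min vv tv ∨
           max wv D - min wv D = 3*m-1 - (max vv tv - min vv tv))
    (hfv : wv < 3*m-1) (hvne : vv ≠ bv) (hvnt : vv ≠ tv)
    (hv' : vv < 3*m-1) (hb' : bv < 3*m-1) (ht' : tv < 3*m-1) : wv ≤ D := by
  omega

lemma w_circ (m wu wv uv vv : ℕ) (hm : 2 ≤ m) (hwu : wu ≤ m - 1) (hwv : wv ≤ m - 1)
    (hd : max wu wv - min wu wv = max uv vv - min uv vv ∨
          max wu wv - min wu wv = 3*m-1 - (max uv vv - min uv vv))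
    (hu' : uv < 3*m-1) (hv' : vv < 3*m-1) (hne : uv ≠ vv) :
    max wu wv - min wu wv =
      min (max uv vv - min uv vv) (3*m-1 - (max uv vv - min uv vv)) := by
  omega

lemma tri_false (m av bv dv : ℕ) (hm : 2 ≤ m)
    (ha : av < 3*m-1) (hb : bv < 3*m-1) (hd : dv < 3*m-1)
    (k1 : m ≤ min (max av bv - min av bv) (3*m-1 - (max av bv - min av bv)))
    (k2 : m ≤ min (max av dv - min av dv) (3*m-1 - (max av dv - min av dv)))
    (k3 : m ≤ min (max bv dv - min bv dv) (3*m-1 - (max bv dv - min bv dv))) : False := by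
  omega


/-- From a linear colouring of `K_m` avoiding a `k s`-clique in each
colour `s ∈ {1, …, r}`, there exists a cyclic colouring of `K_{3m-1}` in the colours
`{1, …, r+1}` avoiding a `k s`-clique in each colour `s ∈ {1, …, r}` and avoiding
triangles in colour `r + 1`. -/
theorem stmt_1 (m r : ℕ) (hm : 2 ≤ m) (hr : 1 ≤ r) (c : ℕ → ℕ)
    (hc : ∀ l, 1 ≤ l → l ≤ m - 1 → 1 ≤ c l ∧ c l ≤ r)
    (k : ℕ → ℕ) (hk : ∀ s, 1 ≤ s → s ≤ r → 2 ≤ k s)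
    (hU : ∀ s, 1 ≤ s → s ≤ r → ¬ HasMonoClique (linCol m c) s (k s)) :
    ∃ c'' : ℕ → ℕ,
      (∀ l, 1 ≤ l → l ≤ 3 * m - 2 → 1 ≤ c'' l ∧ c'' l ≤ r + 1) ∧
      (∀ l, 1 ≤ l → l ≤ 3 * m - 2 → c'' l = c'' (3 * m - 1 - l)) ∧
      (∀ s, 1 ≤ s → s ≤ r → ¬ HasMonoClique (linCol (3 * m - 1) c'') s (k s)) ∧
      ¬ HasMonoClique (linCol (3 * m - 1) c'') (r + 1) 3 := by
  refine ⟨ccol m r c, ?_, ?_, ?_, ?_⟩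
  · -- bounds
    intro l hl1 hl2
    rcases ccol_spec m r hm c l hl1 hl2 with ⟨ha, hb, he⟩ | ⟨ha, he⟩
    · rw [he]; have := hc _ ha hb; omega
    · rw [he]; omega
  · -- symmetry
    intro l hl1 hl2
    have hl1' : 1 ≤ 3*m-1 - l := by omega
    have hl2' : 3*m-1 - l ≤ 3*m-2 := by omega
    rcases ccol_spec m r hm c l hl1 hl2 with ⟨ha, hb, he⟩ | ⟨ha, he⟩ <;>
      rcases ccol_spec m r hm c (3*m-1-l) hl1' hl2' with ⟨ha', hb', he'⟩ | ⟨ha', he'⟩ <;>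
      rw [he, he'] <;> first
      | (congr 1; omega)
      | omega
  · -- no s-clique
    intro s hs1 hs2 hcl
    obtain ⟨S, hScard, hSmono⟩ := hcl
    have hedge : ∀ u ∈ S, ∀ v ∈ S, u ≠ v →
        1 ≤ min (max u.val v.val - min u.val v.val) (3*m-1 - (max u.val v.val - min u.val v.val)) ∧
        min (max u.val v.val - min u.val v.val) (3*m-1 - (max u.val v.val - min u.val v.val)) ≤ m - 1 ∧
        c (min (max u.val v.val - min u.val v.val) (3*m-1 - (max u.val v.val - min u.val v.val))) = s := by
      intro u hu v hv huv
      have hcol := hSmono u hu v hv huv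
      have hne : u.val ≠ v.val := fun h => huv (Fin.ext h)
      have hu' := u.isLt; have hv' := v.isLt
      have hd1 : 1 ≤ max u.val v.val - min u.val v.val := by omega
      have hd2 : max u.val v.val - min u.val v.val ≤ 3*m-2 := by omega
      unfold linCol at hcol
      rcases ccol_spec m r hm c _ hd1 hd2 with ⟨ha, hb, he⟩ | ⟨ha, he⟩
      · rw [he] at hcol; exact ⟨ha, hb, hcol⟩
      · rw [he] at hcol; omega
    clear hSmono
    have h2 : 1 < S.card := by rw [hScard]; exact hk s hs1 hs2
    obtain ⟨x, hx, y, hy, hxy⟩ := Finset.one_lt_card.mp h2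
    have hPne : ((S ×ˢ S).filter (fun p => p.1 ≠ p.2)).Nonempty :=
      ⟨(x, y), Finset.mem_filter.mpr ⟨Finset.mem_product.mpr ⟨hx, hy⟩, hxy⟩⟩
    obtain ⟨⟨x0, y0⟩, hp, hmax⟩ := Finset.exists_max_image _
      (fun p : Fin (3*m-1) × Fin (3*m-1) =>
        min (max p.1.val p.2.val - min p.1.val p.2.val)
            (3*m-1 - (max p.1.val p.2.val - min p.1.val p.2.val))) hPne
    rw [Finset.mem_filter, Finset.mem_product] at hp
    obtain ⟨⟨hx0, hy0⟩, hne0⟩ := hp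
    obtain ⟨D, hD⟩ : ∃ D, D = min (max x0.val y0.val - min x0.val y0.val)
        (3*m-1 - (max x0.val y0.val - min x0.val y0.val)) := ⟨_, rfl⟩
    have hub : ∀ u ∈ S, ∀ v ∈ S, u ≠ v →
        min (max u.val v.val - min u.val v.val) (3*m-1 - (max u.val v.val - min u.val v.val)) ≤ D := by
      intro u hu v hv huv
      rw [hD]
      exact hmax (u, v) (Finset.mem_filter.mpr ⟨Finset.mem_product.mpr ⟨hu, hv⟩, huv⟩)
    clear hmax
    obtain ⟨hD1, hD2, hDs⟩ := hedge x0 hx0 y0 hy0 hne0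
    rw [← hD] at hD1 hD2 hDs
    have hkey : ∃ b ∈ S, ∃ t ∈ S, b ≠ t ∧ (t.val + (3*m-1 - b.val)) % (3*m-1) = D := by
      have hx0' := x0.isLt; have hy0' := y0.isLt
      have hnev : x0.val ≠ y0.val := fun h => hne0 (Fin.ext h)
      clear hub hedge hD1 hD2 hDs
      by_cases hle : max x0.val y0.val - min x0.val y0.val
          ≤ 3*m-1 - (max x0.val y0.val - min x0.val y0.val)
      · rcases Nat.lt_or_ge x0.val y0.val with h | h
        · exact ⟨x0, hx0, y0, hy0, hne0,
            by rw [rotval (3*m-1) _ _ x0.isLt y0.isLt]; split_ifs <;> omega⟩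
        · exact ⟨y0, hy0, x0, hx0, hne0.symm,
            by rw [rotval (3*m-1) _ _ y0.isLt x0.isLt]; split_ifs <;> omega⟩
      · rcases Nat.lt_or_ge x0.val y0.val with h | h
        · exact ⟨y0, hy0, x0, hx0, hne0.symm,
            by rw [rotval (3*m-1) _ _ y0.isLt x0.isLt]; split_ifs <;> omega⟩
        · exact ⟨x0, hx0, y0, hy0, hne0,
            by rw [rotval (3*m-1) _ _ x0.isLt y0.isLt]; split_ifs <;> omega⟩
    obtain ⟨b, hb, t, ht, hbt, hrot⟩ := hkey
    clear hD hDs hx0 hy0 hne0 hx hy hxy hPne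
    obtain ⟨w, hw⟩ : ∃ w : Fin (3*m-1) → ℕ,
        ∀ v, w v = if b.val ≤ v.val then v.val - b.val else 3*m-1 - (b.val - v.val) :=
      ⟨_, fun v => rfl⟩
    have hwlt : ∀ v : Fin (3*m-1), w v < 3*m-1 := fun v => by
      rw [hw v]; exact w_lt m _ _ hm b.isLt v.isLt
    have hwinj : ∀ u v : Fin (3*m-1), u ≠ v → w u ≠ w v := fun u v huv => by
      rw [hw u, hw v]
      exact w_inj m _ _ _ hm b.isLt u.isLt v.isLt (fun h => huv (Fin.ext h))
    have hdd : ∀ u v : Fin (3*m-1),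
        max (w u) (w v) - min (w u) (w v) = max u.val v.val - min u.val v.val ∨
        max (w u) (w v) - min (w u) (w v) = 3*m-1 - (max u.val v.val - min u.val v.val) :=
      fun u v => by
        rw [hw u, hw v]
        exact w_dd m _ _ _ hm b.isLt u.isLt v.isLt
    have hwb : w b = 0 := by rw [hw b]; simp
    have hwt : w t = D := by
      rw [hw t, ← rotval (3*m-1) _ _ b.isLt t.isLt]; exact hrot
    have harc : ∀ v ∈ S, w v ≤ m - 1 := by
      intro v hv
      by_cases hvb : v = b
      · rw [hvb, hwb]; omega
      by_cases hvt : v = t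
      · rw [hvt, hwt]; exact hD2
      have h1 := hub v hv b hb hvb
      have h2 := hub v hv t ht hvt
      have hd1 := hdd v b
      have hd2 := hdd v t
      rw [hwb] at hd1; rw [hwt] at hd2
      exact le_trans
        (w_arc m D (w v) v.val b.val t.val hm hD2 h1 h2 hd1 hd2 (hwlt v)
          (fun h => hvb (Fin.ext h)) (fun h => hvt (Fin.ext h)) v.isLt b.isLt t.isLt)
        hD2
    clear hub hwb hwt hrot hbt hb ht hD1 hD2
    apply hU s hs1 hs2
    refine ⟨S.image (fun v => (⟨w v % m, Nat.mod_lt _ (by omega)⟩ : Fin m)), ?_, ?_⟩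
    · rw [Finset.card_image_of_injOn, hScard]
      intro u hu v hv h
      have hval : w u % m = w v % m := congrArg Fin.val h
      rw [Nat.mod_eq_of_lt (by have := harc u hu; omega),
          Nat.mod_eq_of_lt (by have := harc v hv; omega)] at hval
      by_contra hne
      exact hwinj u v hne hval
    · intro i hi j hj hij
      obtain ⟨u, hu, hiu⟩ := Finset.mem_image.mp hi
      obtain ⟨v, hv, hjv⟩ := Finset.mem_image.mp hj
      have huv : u ≠ v := by rintro rfl; exact hij (hiu ▸ hjv ▸ rfl)
      have hival : i.val = w u := by
        rw [← hiu]
        exact Nat.mod_eq_of_lt (by have := harc u hu; omega)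
      have hjval : j.val = w v := by
        rw [← hjv]
        exact Nat.mod_eq_of_lt (by have := harc v hv; omega)
      obtain ⟨he1, he2, he3⟩ := hedge u hu v hv huv
      unfold linCol
      rw [hival, hjval,
        w_circ m (w u) (w v) u.val v.val hm (harc u hu) (harc v hv) (hdd u v)
          u.isLt v.isLt (fun h => huv (Fin.ext h)), he3]
  · -- no (r+1)-triangle
    intro hcl
    obtain ⟨S, hScard, hSmono⟩ := hcl
    obtain ⟨a, b, d, hab, had, hbd, hSeq⟩ := Finset.card_eq_three.mp hScard
    have hmem : ∀ x : Fin (3*m-1), x ∈ S ↔ x = a ∨ x = b ∨ x = d := by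
      intro x; rw [hSeq]; simp
    have key : ∀ u v : Fin (3*m-1), u ∈ S → v ∈ S → u ≠ v →
        m ≤ min (max u.val v.val - min u.val v.val)
              (3*m-1 - (max u.val v.val - min u.val v.val)) := by
      intro u v hu hv huv
      have hcol := hSmono u hu v hv huv
      have hne : u.val ≠ v.val := fun h => huv (Fin.ext h)
      have hu' := u.isLt; have hv' := v.isLt
      have hd1 : 1 ≤ max u.val v.val - min u.val v.val := by omega
      have hd2 : max u.val v.val - min u.val v.val ≤ 3*m-2 := by omega
      unfold linCol at hcol
      rcases ccol_spec m r hm c _ hd1 hd2 with ⟨ha', hb', he⟩ | ⟨ha', he⟩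
      · rw [he] at hcol
        have := hc _ ha' hb'
        omega
      · exact ha'
    exact tri_false m a.val b.val d.val hm a.isLt b.isLt d.isLt
      (key a b ((hmem a).mpr (by tauto)) ((hmem b).mpr (by tauto)) hab)
      (key a d ((hmem a).mpr (by tauto)) ((hmem d).mpr (by tauto)) had)
      (key b d ((hmem b).mpr (by tauto)) ((hmem d).mpr (by tauto)) hbd)
end

section
/- Let m ≥ 2, r ≥ 1, and let c : {1, …, m−1} → {1, …, r} be a linear colouring of K_m such that for each colour s ∈ {1, …, r} there is no monochromatic complete subgraph on k_s vertices in colour s (where each k_s ≥ 2). Define a colouring c' : {1, …, 3m−2} → {1, …, r+1} by c'(l) = c(l) for 1 ≤ l ≤ m−1, c'(l) = r+1 for m ≤ l ≤ 2m−1, and c'(l) = c(l − (2m−1)) for 2m ≤ l ≤ 3m−2. Then the linear colouring of K_{3m−1} determined by c' has, for each s ∈ {1, …, r}, no monochromatic complete subgraph on k_s vertices in colour s, and has no monochromatic triangle in colour r + 1. -/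
def gAux (m a x : ℕ) : ℕ :=
  min (if x - a ≤ m - 1 then x - a else x - a - (2 * m - 1)) (m - 1)

/-- The explicit linear colouring `c'` of `K_{3m-1}` (copy of `c` on
lengths `1, …, m-1`, colour `r+1` on lengths `m, …, 2m-1`, shifted copy of `c` on
lengths `2m, …, 3m-2`) avoids a `k s`-clique in each colour `s ∈ {1, …, r}` and
avoids triangles in colour `r + 1`. -/
theorem stmt_2 (m r : ℕ) (hm : 2 ≤ m) (hr : 1 ≤ r) (c : ℕ → ℕ)
    (hc : ∀ l, 1 ≤ l → l ≤ m - 1 → 1 ≤ c l ∧ c l ≤ r)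
    (k : ℕ → ℕ) (hk : ∀ s, 1 ≤ s → s ≤ r → 2 ≤ k s)
    (hU : ∀ s, 1 ≤ s → s ≤ r → ¬ HasMonoClique (linCol m c) s (k s))
    (c' : ℕ → ℕ)
    (hc'1 : ∀ l, 1 ≤ l → l ≤ m - 1 → c' l = c l)
    (hc'2 : ∀ l, m ≤ l → l ≤ 2 * m - 1 → c' l = r + 1)
    (hc'3 : ∀ l, 2 * m ≤ l → l ≤ 3 * m - 2 → c' l = c (l - (2 * m - 1))) :
    (∀ s, 1 ≤ s → s ≤ r → ¬ HasMonoClique (linCol (3 * m - 1) c') s (k s)) ∧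
    ¬ HasMonoClique (linCol (3 * m - 1) c') (r + 1) 3 := by
  constructor
  · rintro s hs1 hs2 ⟨S, hcard, hmono⟩
    have hne : S.Nonempty := by
      rw [← Finset.card_pos, hcard]; have := hk s hs1 hs2; omega
    set a := S.min' hne with ha
    have hamem : a ∈ S := S.min'_mem hne
    -- allowed lengths
    have hallow : ∀ u ∈ S, ∀ v ∈ S, u.val < v.val →
        (v.val - u.val ≤ m - 1 ∨ 2 * m ≤ v.val - u.val) := by
      intro u hu v hv huv
      by_contra hcon
      push_neg at hcon
      have hne' : u ≠ v := by
        intro h; rw [h] at huv; omega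
      have h := hmono u hu v hv hne'
      simp only [linCol] at h
      have e : max u.val v.val - min u.val v.val = v.val - u.val := by omega
      rw [e] at h
      have h2 := hc'2 (v.val - u.val) (by omega) (by omega)
      omega
    have hkey : ∀ u ∈ S, ∀ v ∈ S, u.val < v.val →
        gAux m a.val u.val < gAux m a.val v.val ∧
        c (gAux m a.val v.val - gAux m a.val u.val) = s := by
      intro u hu v hv huv
      have hau : a.val ≤ u.val := S.min'_le u hu
      have hav : a.val ≤ v.val := S.min'_le v hv
      have hv3 : v.val < 3 * m - 1 := v.isLt
      have hdu : u.val - a.val ≤ m - 1 ∨ 2 * m ≤ u.val - a.val := by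
        rcases Nat.eq_or_lt_of_le hau with h | h
        · left; omega
        · exact hallow a hamem u hu h
      have hdv : v.val - a.val ≤ m - 1 ∨ 2 * m ≤ v.val - a.val := by
        rcases Nat.eq_or_lt_of_le hav with h | h
        · left; omega
        · exact hallow a hamem v hv h
      have hduv := hallow u hu v hv huv
      have hne' : u ≠ v := by intro h; rw [h] at huv; omega
      have hcol : c' (v.val - u.val) = s := by
        have h := hmono u hu v hv hne'
        simp only [linCol] at h
        have e : max u.val v.val - min u.val v.val = v.val - u.val := by omega
        rwa [e] at h
      by_cases h1 : u.val - a.val ≤ m - 1 <;> by_cases h2 : v.val - a.val ≤ m - 1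
      · have e1 : gAux m a.val u.val = u.val - a.val := by
          unfold gAux; split_ifs <;> omega
        have e2 : gAux m a.val v.val = v.val - a.val := by
          unfold gAux; split_ifs <;> omega
        constructor
        · omega
        · rw [e1, e2]
          have e : (v.val - a.val) - (u.val - a.val) = v.val - u.val := by omega
          rw [e, ← hc'1 (v.val - u.val) (by omega) (by omega)]
          exact hcol
      · have h2' : 2 * m ≤ v.val - a.val := by omega
        have e1 : gAux m a.val u.val = u.val - a.val := by
          unfold gAux; split_ifs <;> omega
        have e2 : gAux m a.val v.val = (v.val - a.val) - (2 * m - 1) := by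
          unfold gAux; split_ifs <;> omega
        have hbig : 2 * m ≤ v.val - u.val := by omega
        constructor
        · omega
        · rw [e1, e2]
          have e : ((v.val - a.val) - (2 * m - 1)) - (u.val - a.val)
              = (v.val - u.val) - (2 * m - 1) := by omega
          rw [e, ← hc'3 (v.val - u.val) hbig (by omega)]
          exact hcol
      · exfalso; omega
      · have h1' : 2 * m ≤ u.val - a.val := by omega
        have e1 : gAux m a.val u.val = (u.val - a.val) - (2 * m - 1) := by
          unfold gAux; split_ifs <;> omega
        have e2 : gAux m a.val v.val = (v.val - a.val) - (2 * m - 1) := by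
          unfold gAux; split_ifs <;> omega
        constructor
        · omega
        · rw [e1, e2]
          have e : ((v.val - a.val) - (2 * m - 1)) - ((u.val - a.val) - (2 * m - 1))
              = v.val - u.val := by omega
          rw [e, ← hc'1 (v.val - u.val) (by omega) (by omega)]
          exact hcol
    have hglt : ∀ x : ℕ, gAux m a.val x < m := by
      intro x; unfold gAux; split_ifs <;> omega
    apply hU s hs1 hs2
    refine ⟨S.image (fun v => ⟨gAux m a.val v.val, hglt v.val⟩), ?_, ?_⟩
    · rw [Finset.card_image_of_injOn, hcard]
      intro u hu v hv huv
      have huv' : gAux m a.val u.val = gAux m a.val v.val := congrArg Fin.val huv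
      rcases lt_trichotomy u.val v.val with h | h | h
      · have := (hkey u hu v hv h).1; omega
      · exact Fin.ext h
      · have := (hkey v hv u hu h).1; omega
    · intro i hi j hj hij
      simp only [Finset.mem_image] at hi hj
      obtain ⟨u, hu, rfl⟩ := hi
      obtain ⟨v, hv, rfl⟩ := hj
      have hneval : gAux m a.val u.val ≠ gAux m a.val v.val := by
        intro h; exact hij (Fin.ext h)
      simp only [linCol]
      rcases lt_trichotomy u.val v.val with h | h | h
      · obtain ⟨hlt, hcs⟩ := hkey u hu v hv h
        have e : max (gAux m a.val u.val) (gAux m a.val v.val)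
            - min (gAux m a.val u.val) (gAux m a.val v.val)
            = gAux m a.val v.val - gAux m a.val u.val := by omega
        rw [e]; exact hcs
      · exact absurd (congrArg (gAux m a.val) h) hneval
      · obtain ⟨hlt, hcs⟩ := hkey v hv u hu h
        have e : max (gAux m a.val u.val) (gAux m a.val v.val)
            - min (gAux m a.val u.val) (gAux m a.val v.val)
            = gAux m a.val u.val - gAux m a.val v.val := by omega
        rw [e]; exact hcs
  · rintro ⟨S, hcard, hmono⟩
    rw [Finset.card_eq_three] at hcard
    obtain ⟨x, y, z, hxy, hxz, hyz, hS⟩ := hcard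
    have hmem : x ∈ S ∧ y ∈ S ∧ z ∈ S := by
      rw [hS]; refine ⟨?_, ?_, ?_⟩ <;> simp
    have key : ∀ p ∈ S, ∀ q ∈ S, p ≠ q →
        m ≤ max p.val q.val - min p.val q.val ∧
        max p.val q.val - min p.val q.val ≤ 2 * m - 1 := by
      intro p hp q hq hpq
      have h := hmono p hp q hq hpq
      simp only [linCol] at h
      have hvne : p.val ≠ q.val := fun h' => hpq (Fin.ext h')
      have hp3 : p.val < 3 * m - 1 := p.isLt
      have hq3 : q.val < 3 * m - 1 := q.isLt
      set d := max p.val q.val - min p.val q.val with hd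
      have hd1 : 1 ≤ d := by omega
      have hd2 : d ≤ 3 * m - 2 := by omega
      rcases Nat.lt_or_ge d m with h1 | h1
      · have e := hc'1 d hd1 (by omega)
        have h2 := (hc d hd1 (by omega)).2
        omega
      rcases Nat.lt_or_ge d (2 * m) with h2 | h2
      · exact ⟨h1, by omega⟩
      · have e := hc'3 d h2 (by omega)
        have h3 := (hc (d - (2 * m - 1)) (by omega) (by omega)).2
        omega
    have K1 := key x hmem.1 y hmem.2.1 hxy
    have K2 := key x hmem.1 z hmem.2.2 hxz
    have K3 := key y hmem.2.1 z hmem.2.2 hyz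
    omega
end
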